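/- Let u, v : Ω → ℝ be smooth. If u₃ = v₂ − v₁·v₃ and u₄ = v₃ − v₁·v₄ hold identically on Ω, then v satisfies the second-order equation v₂₄ − v₃₃ = v₃·v₁₄ − v₄·v₁₃ on Ω. -/

import Mathlib

noncomputable def pd (i : Fin 4) (F : (Fin 4 → ℝ) → ℝ) : (Fin 4 → ℝ) → ℝ :=
  fun x => fderiv ℝ F x (Pi.single i 1)

lemma pd_congr {i : Fin 4} {F G : (Fin 4 → ℝ) → ℝ} {x : Fin 4 → ℝ}
    (h : F =ᶠ[nhds x] G) : pd i F x = pd i G x := by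
  simp only [pd, h.fderiv_eq]

lemma pd_contDiffAt {i : Fin 4} {F : (Fin 4 → ℝ) → ℝ} {x : Fin 4 → ℝ} {m : ℕ∞}
    (h : ContDiffAt ℝ (⊤ : ℕ∞) F x) : ContDiffAt ℝ m (pd i F) x := by
  have h1 : ContDiffAt ℝ m (fderiv ℝ F) x := h.fderiv_right (by exact_mod_cast le_top)
  exact (ContinuousLinearMap.apply ℝ ℝ (Pi.single i 1 : Fin 4 → ℝ)).contDiff.contDiffAt.comp x h1

lemma pd_sub {i : Fin 4} {F G : (Fin 4 → ℝ) → ℝ} {x : Fin 4 → ℝ}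
    (hF : DifferentiableAt ℝ F x) (hG : DifferentiableAt ℝ G x) :
    pd i (fun y => F y - G y) x = pd i F x - pd i G x := by
  simp [pd, fderiv_fun_sub hF hG]

lemma pd_mul {i : Fin 4} {F G : (Fin 4 → ℝ) → ℝ} {x : Fin 4 → ℝ}
    (hF : DifferentiableAt ℝ F x) (hG : DifferentiableAt ℝ G x) :
    pd i (fun y => F y * G y) x = pd i F x * G x + F x * pd i G x := by
  simp [pd, fderiv_fun_mul hF hG]; ring

lemma pd_pd {i j : Fin 4} {F : (Fin 4 → ℝ) → ℝ} {x : Fin 4 → ℝ}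
    (h : ContDiffAt ℝ (⊤ : ℕ∞) F x) :
    pd i (pd j F) x = fderiv ℝ (fderiv ℝ F) x (Pi.single i 1) (Pi.single j 1) := by
  have h1 : DifferentiableAt ℝ (fderiv ℝ F) x :=
    (h.fderiv_right (m := 1) (by norm_cast)).differentiableAt one_ne_zero
  show fderiv ℝ (fun y => fderiv ℝ F y (Pi.single j 1)) x (Pi.single i 1) = _
  rw [fderiv_clm_apply h1 (differentiableAt_const _)]
  simp

lemma pd_comm {i j : Fin 4} {F : (Fin 4 → ℝ) → ℝ} {x : Fin 4 → ℝ}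
    (h : ContDiffAt ℝ (⊤ : ℕ∞) F x) :
    pd i (pd j F) x = pd j (pd i F) x := by
  rw [pd_pd h, pd_pd h]
  exact h.isSymmSndFDerivAt (by rw [minSmoothness_of_isRCLikeNormedField]; exact WithTop.coe_le_coe.mpr le_top) _ _

/-- Elimination of `u` from the Segre type [3] system `u₃ = v₂ − v₁v₃`, `u₄ = v₃ − v₁v₄`
yields `v₂₄ − v₃₃ = v₃v₁₄ − v₄v₁₃`.  Coordinates `x¹,…,x⁴` are indexed by `0,…,3`. -/
theorem statement11 (Ω : Set (Fin 4 → ℝ)) (hΩ : IsOpen Ω)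
    (u v : (Fin 4 → ℝ) → ℝ)
    (hu : ContDiffOn ℝ (⊤ : ℕ∞) u Ω) (hv : ContDiffOn ℝ (⊤ : ℕ∞) v Ω)
    (heq1 : ∀ x ∈ Ω, pd 2 u x = pd 1 v x - pd 0 v x * pd 2 v x)
    (heq2 : ∀ x ∈ Ω, pd 3 u x = pd 2 v x - pd 0 v x * pd 3 v x) :
    ∀ x ∈ Ω,
      pd 3 (pd 1 v) x - pd 2 (pd 2 v) x
        = pd 2 v x * pd 3 (pd 0 v) x - pd 3 v x * pd 2 (pd 0 v) x := by
  intro x hx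
  have hxn : Ω ∈ nhds x := hΩ.mem_nhds hx
  have hvx : ContDiffAt ℝ (⊤ : ℕ∞) v x := hv.contDiffAt hxn
  have hux : ContDiffAt ℝ (⊤ : ℕ∞) u x := hu.contDiffAt hxn
  -- differentiability of first partials of v at any point of Ω
  have hdiff : ∀ (k : Fin 4), ∀ y ∈ Ω, DifferentiableAt ℝ (pd k v) y := fun k y hy =>
    (pd_contDiffAt (m := 1) (hv.contDiffAt (hΩ.mem_nhds hy))).differentiableAt (by simp)
  have key : pd 3 (pd 2 u) x = pd 2 (pd 3 u) x := pd_comm hux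
  have e1 : pd 3 (pd 2 u) x
      = pd 3 (pd 1 v) x - (pd 3 (pd 0 v) x * pd 2 v x + pd 0 v x * pd 3 (pd 2 v) x) := by
    have hcong : pd 2 u =ᶠ[nhds x] fun y => pd 1 v y - pd 0 v y * pd 2 v y := by
      filter_upwards [hxn] with y hy using heq1 y hy
    rw [pd_congr hcong,
      pd_sub (hdiff 1 x hx) ((hdiff 0 x hx).fun_mul (hdiff 2 x hx)),
      pd_mul (hdiff 0 x hx) (hdiff 2 x hx)]
  have e2 : pd 2 (pd 3 u) x
      = pd 2 (pd 2 v) x - (pd 2 (pd 0 v) x * pd 3 v x + pd 0 v x * pd 2 (pd 3 v) x) := by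
    have hcong : pd 3 u =ᶠ[nhds x] fun y => pd 2 v y - pd 0 v y * pd 3 v y := by
      filter_upwards [hxn] with y hy using heq2 y hy
    rw [pd_congr hcong,
      pd_sub (hdiff 2 x hx) ((hdiff 0 x hx).fun_mul (hdiff 3 x hx)),
      pd_mul (hdiff 0 x hx) (hdiff 3 x hx)]
  have e3 : pd 3 (pd 2 v) x = pd 2 (pd 3 v) x := pd_comm hvx
  rw [e1, e2, e3] at key
  linarith
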